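/- Every dual automorphism-invariant abelian group is reduced: if G is an abelian group that is dual automorphism-invariant as a ℤ-module, then G has no nonzero divisible subgroup. -/

import Mathlib

open LinearMap Submodule

/-- A submodule N of M is small (superfluous) in M:
N + K = M implies K = M for every submodule K. -/
def IsSmall {R : Type*} [Ring R] {M : Type*} [AddCommGroup M] [Module R M]
    (N : Submodule R M) : Prop :=
  ∀ K : Submodule R M, N ⊔ K = ⊤ → K = ⊤

/-- M is a dual automorphism-invariant R-module: for any two small submodules
K₁, K₂ of M, every surjective homomorphism η : M/K₁ → M/K₂ whose kernel is
small in M/K₁ lifts to an endomorphism φ of M (i.e. π₂ ∘ φ = η ∘ π₁). -/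
def IsDualAutoInv (R M : Type*) [Ring R] [AddCommGroup M] [Module R M] : Prop :=
  ∀ (K₁ K₂ : Submodule R M), IsSmall K₁ → IsSmall K₂ →
    ∀ η : (M ⧸ K₁) →ₗ[R] (M ⧸ K₂), Function.Surjective η →
      IsSmall (LinearMap.ker η) →
      ∃ φ : M →ₗ[R] M, K₂.mkQ ∘ₗ φ = η ∘ₗ K₁.mkQ

section Aux

variable {G : Type*} [AddCommGroup G]

/-- `D` is a divisible submodule. -/
def DivIn (D : Submodule ℤ G) : Prop :=
  ∀ n : ℕ, 0 < n → ∀ d ∈ D, ∃ x ∈ D, (n : ℤ) • x = d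

lemma isSmall_bot {R : Type*} [Ring R] {M : Type*} [AddCommGroup M] [Module R M] :
    IsSmall (⊥ : Submodule R M) := fun K hK => by simpa using hK

lemma divIn_int {D : Submodule ℤ G} (hD : DivIn D) :
    ∀ a : ℤ, a ≠ 0 → ∀ d ∈ D, ∃ x ∈ D, a • x = d := by
  intro a ha d hd
  obtain ⟨x, hx, hax⟩ := hD a.natAbs (Int.natAbs_pos.mpr ha) d hd
  rcases Int.natAbs_eq a with h | h
  · exact ⟨x, hx, by rw [h]; exact hax⟩
  · refine ⟨-x, neg_mem hx, ?_⟩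
    rw [h, neg_smul, smul_neg, neg_neg]
    exact hax

/-- if `x` is killed by two coprime integers, it is zero. -/
lemma smul_coprime_zero {a b : ℤ} (h : IsCoprime a b) {x : G}
    (ha : a • x = 0) (hb : b • x = 0) : x = 0 := by
  obtain ⟨u, v, huv⟩ := h
  calc x = (u * a + v * b) • x := by rw [huv, one_smul]
  _ = u • (a • x) + v • (b • x) := by rw [add_smul, mul_smul, mul_smul]
  _ = 0 := by rw [ha, hb, smul_zero, smul_zero, add_zero]

lemma prime_dvd_of_smul {p : ℕ} (hp : p.Prime) {d : G} (hd : d ≠ 0)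
    (hpd : (p : ℤ) • d = 0) : ∀ c : ℤ, c • d = 0 → (p : ℤ) ∣ c := by
  intro c hc
  by_contra hndvd
  have hcop : IsCoprime (p : ℤ) c := by
    rw [Int.isCoprime_iff_gcd_eq_one]
    have : ¬ p ∣ c.natAbs := by
      intro hdd
      exact hndvd (Int.natAbs_dvd_natAbs.mp (by simpa using hdd))
    have := (Nat.Prime.coprime_iff_not_dvd hp).mpr this
    simpa [Int.gcd] using this
  exact hd (smul_coprime_zero hcop hpd hc)

/-- A cyclic subgroup of a divisible submodule is small. -/
lemma isSmall_span_of_divIn {D : Submodule ℤ G} (hD : DivIn D) {d : G} (hd : d ∈ D) :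
    IsSmall (span ℤ {d} : Submodule ℤ G) := by
  intro K hK
  set c : G ⧸ K := K.mkQ d with hc
  have hall : ∀ t : G ⧸ K, ∃ a : ℤ, t = a • c := by
    intro t
    obtain ⟨y, rfl⟩ := K.mkQ_surjective t
    have hy : y ∈ (span ℤ {d} : Submodule ℤ G) ⊔ K := hK ▸ mem_top
    obtain ⟨s, hs, k, hk, rfl⟩ := mem_sup.mp hy
    obtain ⟨a, rfl⟩ := mem_span_singleton.mp hs
    refine ⟨a, ?_⟩
    have hk0 : K.mkQ k = 0 := (Submodule.Quotient.mk_eq_zero K).mpr hk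
    rw [map_add, map_smul, hk0, add_zero, hc]
  have key : ∀ n : ℕ, 0 < n → ∃ m : ℤ, ((n : ℤ) * m - 1) • c = 0 := by
    intro n hn
    obtain ⟨x, hx, hnx⟩ := hD n hn d hd
    obtain ⟨m, hm⟩ := hall (K.mkQ x)
    refine ⟨m, ?_⟩
    have h1 : (n : ℤ) • K.mkQ x = c := by rw [← map_smul, hnx]
    rw [hm, smul_smul] at h1
    rw [sub_smul, one_smul, h1, sub_self]
  obtain ⟨m₂, h2'⟩ := key 2 (by norm_num)
  have h2 : ((2:ℤ) * m₂ - 1) • c = 0 := by exact_mod_cast h2'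
  set s : ℕ := ((2 : ℤ) * m₂ - 1).natAbs with hs
  have hs0 : 0 < s := Int.natAbs_pos.mpr (by omega)
  have hsc : (s : ℤ) • c = 0 := by
    rcases Int.natAbs_eq ((2 : ℤ) * m₂ - 1) with h | h
    · rw [← h]; exact h2
    · have : ((s : ℤ)) • c = -(((2:ℤ) * m₂ - 1) • c) := by
        rw [← neg_smul]; congr 1; omega
      rw [this, h2, neg_zero]
  obtain ⟨m₃, h3⟩ := key s hs0
  have hc0 : c = 0 := by
    calc c = ((s : ℤ) * m₃) • c - ((s : ℤ) * m₃ - 1) • c := by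
          rw [sub_smul, one_smul, sub_sub_cancel]
    _ = m₃ • ((s : ℤ) • c) - ((s : ℤ) * m₃ - 1) • c := by rw [smul_smul, mul_comm]
    _ = 0 := by rw [hsc, h3, smul_zero, sub_zero]
  have hdK : d ∈ K := (Submodule.Quotient.mk_eq_zero K).mp hc0
  have : (span ℤ {d} : Submodule ℤ G) ≤ K := span_le.mpr (by simpa using hdK)
  rw [← hK, sup_eq_right.mpr this]

/-- A divisible submodule admits a projection. -/
lemma exists_proj_of_divIn {D : Submodule ℤ G} (hD : DivIn D) :
    ∃ e : G →ₗ[ℤ] G, (∀ x : G, e x ∈ D) ∧ (∀ x ∈ D, e x = x) := by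
  have hbaer : Module.Baer ℤ ↥D := by
    intro I g
    obtain ⟨a, ha⟩ := (inferInstance : I.IsPrincipal).principal
    by_cases h0 : a = 0
    · refine ⟨0, fun x hx => ?_⟩
      subst h0
      have hx0 : x = 0 := by
        rw [ha] at hx
        obtain ⟨aa, haa⟩ := mem_span_singleton.mp hx
        rw [← haa, smul_zero]
      have : (⟨x, hx⟩ : I) = 0 := Subtype.ext hx0
      rw [this, map_zero, LinearMap.zero_apply]
    · have haI : a ∈ I := by rw [ha]; exact mem_span_singleton_self a
      obtain ⟨y, hy, hay⟩ := divIn_int hD a h0 ((g ⟨a, haI⟩ : ↥D) : G) (g ⟨a, haI⟩).2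
      refine ⟨LinearMap.toSpanSingleton ℤ ↥D ⟨y, hy⟩, fun x hx => ?_⟩
      obtain ⟨cx, hcx⟩ := Ideal.mem_span_singleton'.mp (ha ▸ hx)
      have hxa : (⟨x, hx⟩ : I) = cx • ⟨a, haI⟩ := Subtype.ext (by simp [← hcx, smul_eq_mul])
      have hgw : a • (⟨y, hy⟩ : ↥D) = g ⟨a, haI⟩ := Subtype.ext (by simpa using hay)
      rw [hxa, map_smul, ← hgw, LinearMap.toSpanSingleton_apply, smul_smul, hcx]
  obtain ⟨hmap, hcomp⟩ := hbaer.extension_property D.subtype D.injective_subtype LinearMap.id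
  refine ⟨D.subtype ∘ₗ hmap, fun x => (hmap x).2, fun x hx => ?_⟩
  have := LinearMap.congr_fun hcomp ⟨x, hx⟩
  simpa using congrArg (D.subtype) this

/-- The key contradiction when `D` contains a nonzero element of prime order. -/
lemma torsion_case (h : IsDualAutoInv ℤ G) {D : Submodule ℤ G} (hDdiv : DivIn D)
    {p : ℕ} (hp : p.Prime) {d : G} (hdD : d ∈ D) (hd0 : d ≠ 0)
    (hpd : (p : ℤ) • d = 0) : False := by
  have horder := prime_dvd_of_smul hp hd0 hpd
  -- the chain
  have hstep : ∀ y : ↥D, ∃ z : ↥D, (p : ℤ) • (z : G) = (y : G) := by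
    intro y
    obtain ⟨z, hz, hpz⟩ := hDdiv p hp.pos (y : G) y.2
    exact ⟨⟨z, hz⟩, hpz⟩
  choose f hf using hstep
  let F : ℕ → ↥D := fun n => Nat.rec ⟨d, hdD⟩ (fun _ prev => f prev) n
  let x : ℕ → G := fun n => (F n).1
  have hx0 : x 0 = d := rfl
  have hxD : ∀ n, x n ∈ D := fun n => (F n).2
  have hxs : ∀ n, (p : ℤ) • x (n + 1) = x n := fun n => hf (F n)
  have L1' : ∀ m j, ((p : ℤ) ^ j) • x (m + j) = x m := by
    intro m j
    induction j with
    | zero => simp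
    | succ j ih =>
      rw [pow_succ, mul_smul, show m + (j + 1) = (m + j) + 1 from rfl, hxs (m + j)]
      exact ih
  have L1 : ∀ n, ((p : ℤ) ^ n) • x n = d := by
    intro n
    have := L1' 0 n
    rwa [Nat.zero_add, hx0] at this
  have L2 : ∀ n, ((p : ℤ) ^ (n + 1)) • x n = 0 := by
    intro n
    rw [pow_succ', mul_smul, L1 n]
    exact hpd
  have L3 : ∀ n (c : ℤ), c • x n = 0 → (p : ℤ) ^ (n + 1) ∣ c := by
    intro n
    induction n with
    | zero =>
      intro c hc
      rw [pow_one]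
      exact horder c (by rwa [hx0] at hc)
    | succ n ih =>
      intro c hc
      have hcn : c • x n = 0 := by
        rw [← hxs n, smul_comm, hc, smul_zero]
      obtain ⟨c₂, rfl⟩ := ih c hcn
      have hc₂d : c₂ • d = 0 := by
        rw [← L1 (n + 1), smul_smul, mul_comm]
        exact hc
      obtain ⟨c₃, rfl⟩ := horder c₂ hc₂d
      exact ⟨c₃, by ring⟩
  -- the submodule P
  let P : Submodule ℤ G :=
    { carrier := {y | ∃ (n : ℕ) (c : ℤ), y = c • x n}
      zero_mem' := ⟨0, 0, by simp⟩
      add_mem' := by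
        rintro y₁ y₂ ⟨n₁, c₁, rfl⟩ ⟨n₂, c₂, rfl⟩
        refine ⟨max n₁ n₂, c₁ * (p : ℤ) ^ (max n₁ n₂ - n₁) + c₂ * (p : ℤ) ^ (max n₁ n₂ - n₂), ?_⟩
        have e₁ : x n₁ = ((p : ℤ) ^ (max n₁ n₂ - n₁)) • x (max n₁ n₂) := by
          rw [← L1' n₁ (max n₁ n₂ - n₁), Nat.add_sub_cancel' (le_max_left n₁ n₂)]
        have e₂ : x n₂ = ((p : ℤ) ^ (max n₁ n₂ - n₂)) • x (max n₁ n₂) := by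
          rw [← L1' n₂ (max n₁ n₂ - n₂), Nat.add_sub_cancel' (le_max_right n₁ n₂)]
        rw [e₁, e₂, smul_smul, smul_smul, add_smul]
      smul_mem' := by
        rintro a y ⟨n, c, rfl⟩
        exact ⟨n, a * c, by rw [smul_smul]⟩ }
  have hxP : ∀ n, x n ∈ P := fun n => ⟨n, 1, (one_smul ℤ _).symm⟩
  have hdP : d ∈ P := by rw [← hx0]; exact hxP 0
  have hPdiv : DivIn P := by
    intro k hk y hy
    obtain ⟨m, c, rfl⟩ := hy
    obtain ⟨a, b, hb, hk'⟩ := Nat.exists_eq_pow_mul_and_not_dvd hk.ne' p hp.ne_one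
    have hbodd : ¬ p ∣ b := hb
    have hcop : IsCoprime (b : ℤ) ((p : ℤ) ^ (m + a + 1)) := by
      have h1 : Nat.Coprime b (p ^ (m + a + 1)) :=
        (Nat.Coprime.pow_right _ ((Nat.Prime.coprime_iff_not_dvd hp).mpr hb).symm)
      have := Nat.Coprime.isCoprime h1
      simpa using this
    obtain ⟨u, v, huv⟩ := hcop
    refine ⟨(u * c) • x (m + a), smul_mem _ _ (hxP _), ?_⟩
    have hxm : ((p : ℤ) ^ a) • x (m + a) = x m := L1' m a
    have hz : ((p : ℤ) ^ (m + a + 1)) • x (m + a) = 0 := L2 (m + a)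
    have hco : ((k : ℤ) * (u * c) - c * (p : ℤ) ^ a) = (-(c * v * (p:ℤ)^a)) * ((p:ℤ) ^ (m + a + 1)) := by
      have hk2 : (k : ℤ) = (p : ℤ) ^ a * (b : ℤ) := by exact_mod_cast hk'
      have huv' : u * (b:ℤ) + v * (p:ℤ) ^ (m + a + 1) = 1 := huv
      linear_combination (u * c) * hk2 + (c * (p:ℤ)^a) * huv'
    have : (k : ℤ) • ((u * c) • x (m + a)) - c • x m =
        (-(c * v * (p:ℤ)^a)) • (((p : ℤ) ^ (m + a + 1)) • x (m + a)) := by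
      rw [← hxm, smul_smul, smul_smul, smul_smul, ← sub_smul, hco]
    rw [hz, smul_zero] at this
    exact sub_eq_zero.mp this
  have L6 : ∀ y ∈ P, (p : ℤ) • y = 0 → y ∈ (span ℤ {d} : Submodule ℤ G) := by
    rintro y ⟨m, c, rfl⟩ hy
    have : ((p : ℤ) * c) • x m = 0 := by rw [mul_smul]; exact hy
    obtain ⟨e, he⟩ := L3 m _ this
    have hpe : (p : ℤ) ≠ 0 := by exact_mod_cast hp.ne_zero
    have hc : c = (p : ℤ) ^ m * e := by
      have : (p:ℤ) * c = (p:ℤ) * ((p:ℤ)^m * e) := by rw [he, pow_succ]; ring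
      exact mul_left_cancel₀ hpe this
    have hrw : c • x m = e • d := by
      rw [hc, ← L1 m, smul_smul, mul_comm]
    rw [hrw]
    exact smul_mem _ _ (mem_span_singleton_self d)
  -- the projection onto P
  obtain ⟨e, heP, heid⟩ := exists_proj_of_divIn hPdiv
  set K : Submodule ℤ G := span ℤ {d} with hKdef
  have hKsmall : IsSmall K := isSmall_span_of_divIn hPdiv hdP
  -- the endomorphism φ₀
  set φ₀ : G →ₗ[ℤ] G := LinearMap.id + ((p : ℤ) - 1) • e with hφ₀def
  have hφ₀apply : ∀ g : G, φ₀ g = g + ((p : ℤ) - 1) • e g := fun g => rfl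
  have hφ₀surj : Function.Surjective φ₀ := by
    intro g
    obtain ⟨y, hyP, hpy⟩ := hPdiv p hp.pos (e g) (heP g)
    refine ⟨g - e g + y, ?_⟩
    have hez : e (g - e g + y) = y := by
      rw [map_add, map_sub, heid _ (heP g), sub_self, zero_add, heid _ hyP]
    rw [hφ₀apply, hez]
    have : ((p : ℤ) - 1) • y = g - (g - e g + y) := by
      rw [sub_smul, one_smul, hpy]; abel
    rw [this]; abel
  have hker : LinearMap.ker φ₀ = K := by
    apply le_antisymm
    · intro g hg
      rw [LinearMap.mem_ker, hφ₀apply] at hg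
      have hgP : g ∈ P := by
        have : g = -(((p : ℤ) - 1) • e g) := by
          have := hg; rw [add_eq_zero_iff_eq_neg] at this; exact this
        rw [this]
        exact neg_mem (smul_mem _ _ (heP g))
      have hegg : e g = g := heid g hgP
      rw [hegg] at hg
      have hpg : (p : ℤ) • g = 0 := by
        have : g + ((p:ℤ) - 1) • g = (p : ℤ) • g := by
          rw [sub_smul, one_smul]; abel
        rwa [this] at hg
      exact L6 g hgP hpg
    · rw [hKdef, span_le, Set.singleton_subset_iff]
      have hd0' : φ₀ d = 0 := by
        have : φ₀ d = (p : ℤ) • d := by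
          rw [hφ₀apply, heid d hdP, sub_smul, one_smul]; abel
        rw [this, hpd]
      exact LinearMap.mem_ker.mpr hd0'
  -- the equivalence η
  let E2 : (G ⧸ K) ≃ₗ[ℤ] G :=
    (Submodule.quotEquivOfEq K (LinearMap.ker φ₀) hker.symm).trans
      (φ₀.quotKerEquivOfSurjective hφ₀surj)
  let E1 : (G ⧸ (⊥ : Submodule ℤ G)) ≃ₗ[ℤ] G := Submodule.quotEquivOfEqBot ⊥ rfl
  let ηe : (G ⧸ (⊥ : Submodule ℤ G)) ≃ₗ[ℤ] (G ⧸ K) := E1.trans E2.symm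
  let η : (G ⧸ (⊥ : Submodule ℤ G)) →ₗ[ℤ] (G ⧸ K) := ηe.toLinearMap
  have hηsurj : Function.Surjective η := ηe.surjective
  have hηker : LinearMap.ker η = ⊥ := LinearMap.ker_eq_bot.mpr ηe.injective
  obtain ⟨φ, hφ⟩ := h ⊥ K isSmall_bot hKsmall η hηsurj (by rw [hηker]; exact isSmall_bot)
  -- φ is surjective
  have hcs : Function.Surjective (K.mkQ ∘ₗ φ) := by
    rw [hφ]
    have : Function.Surjective (⇑η ∘ ⇑(⊥ : Submodule ℤ G).mkQ) :=
      hηsurj.comp (Submodule.mkQ_surjective _)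
    rwa [← LinearMap.coe_comp] at this
  have hsup : K ⊔ LinearMap.range φ = ⊤ := by
    have h1 : Submodule.map K.mkQ (LinearMap.range φ) = ⊤ := by
      rw [← LinearMap.range_comp]
      exact LinearMap.range_eq_top.mpr hcs
    have := congrArg (Submodule.comap K.mkQ) h1
    rwa [Submodule.comap_map_mkQ, Submodule.comap_top] at this
  have hφsurj : LinearMap.range φ = ⊤ := hKsmall _ hsup
  -- kernel computation
  have hkerc : LinearMap.ker (K.mkQ ∘ₗ φ) = ⊥ := by
    rw [hφ, LinearMap.ker_comp, hηker, Submodule.comap_bot, Submodule.ker_mkQ]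
  have hdr : d ∈ LinearMap.range φ := by rw [hφsurj]; trivial
  obtain ⟨g, hg⟩ := hdr
  have hgk : g ∈ LinearMap.ker (K.mkQ ∘ₗ φ) := by
    rw [LinearMap.mem_ker, LinearMap.comp_apply, hg]
    exact (Submodule.Quotient.mk_eq_zero K).mpr (mem_span_singleton_self d)
  rw [hkerc, Submodule.mem_bot] at hgk
  subst hgk
  rw [map_zero] at hg
  exact hd0 hg.symm

/-- The key contradiction in the torsion-free case. -/
lemma torsionfree_case (h : IsDualAutoInv ℤ G) {D : Submodule ℤ G} (hDdiv : DivIn D)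
    (hfree : ∀ (c : ℤ) (y : G), y ∈ D → c • y = 0 → c = 0 ∨ y = 0)
    {d₀ : G} (hd₀D : d₀ ∈ D) (hd₀ : d₀ ≠ 0) : False := by
  -- the rational hull of d₀
  let Q : Submodule ℤ G :=
    { carrier := {y | y ∈ D ∧ ∃ n : ℕ, 0 < n ∧ ∃ m : ℤ, (n : ℤ) • y = m • d₀}
      zero_mem' := ⟨D.zero_mem, 1, one_pos, 0, by simp⟩
      add_mem' := by
        rintro y₁ y₂ ⟨hy₁, n₁, hn₁, m₁, hm₁⟩ ⟨hy₂, n₂, hn₂, m₂, hm₂⟩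
        refine ⟨D.add_mem hy₁ hy₂, n₁ * n₂, Nat.mul_pos hn₁ hn₂,
          (n₂ : ℤ) * m₁ + (n₁ : ℤ) * m₂, ?_⟩
        have hc : ((n₁ * n₂ : ℕ) : ℤ) = (n₂ : ℤ) * (n₁ : ℤ) := by push_cast; ring
        rw [smul_add, hc, mul_smul, hm₁, mul_comm, mul_smul, hm₂, smul_smul, smul_smul,
          ← add_smul]
      smul_mem' := by
        rintro a y ⟨hy, n, hn, m, hm⟩
        exact ⟨D.smul_mem a hy, n, hn, a * m,
          by rw [smul_comm, hm, smul_smul]⟩ }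
  have hd₀Q : d₀ ∈ Q := ⟨hd₀D, 1, one_pos, 1, by simp⟩
  have hQdiv : DivIn Q := by
    rintro k hk y ⟨hyD, n, hn, m, hm⟩
    obtain ⟨z, hzD, hkz⟩ := hDdiv k hk y hyD
    refine ⟨z, ⟨hzD, n * k, Nat.mul_pos hn hk, m, ?_⟩, hkz⟩
    have hc : ((n * k : ℕ) : ℤ) = (n : ℤ) * (k : ℤ) := by push_cast; ring
    rw [hc, mul_smul, hkz, hm]
  set K : Submodule ℤ G := span ℤ {d₀} with hKdef
  have hKsmall : IsSmall K := isSmall_span_of_divIn hQdiv hd₀Q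
  obtain ⟨e, heQ, heid⟩ := exists_proj_of_divIn hQdiv
  have hmk0 : K.mkQ d₀ = 0 := (Submodule.Quotient.mk_eq_zero K).mpr (mem_span_singleton_self d₀)
  -- the image of Q in the quotient
  set QK : Submodule ℤ (G ⧸ K) := Q.map K.mkQ with hQKdef
  have hkill : ∀ (a b : ℤ) (s t : G ⧸ K), a • s = 0 → b • t = 0 → (a * b) • (s + t) = 0 := by
    intro a b s t ha hb
    have h1 : (a * b) • s = 0 := by rw [mul_comm, mul_smul, ha, smul_zero]
    have h2 : (a * b) • t = 0 := by rw [mul_smul, hb, smul_zero]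
    rw [smul_add, h1, h2, add_zero]
  -- 2-primary and odd parts
  let A : Submodule ℤ (G ⧸ K) :=
    { carrier := {t | t ∈ QK ∧ ∃ a : ℕ, ((2 : ℤ) ^ a) • t = 0}
      zero_mem' := ⟨QK.zero_mem, 0, by simp⟩
      add_mem' := by
        rintro t₁ t₂ ⟨ht₁, a₁, ha₁⟩ ⟨ht₂, a₂, ha₂⟩
        refine ⟨QK.add_mem ht₁ ht₂, a₁ + a₂, ?_⟩
        rw [pow_add]
        exact hkill _ _ _ _ ha₁ ha₂
      smul_mem' := by
        rintro c t ⟨ht, a, ha⟩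
        exact ⟨QK.smul_mem c ht, a, by rw [smul_comm, ha, smul_zero]⟩ }
  let B : Submodule ℤ (G ⧸ K) :=
    { carrier := {t | t ∈ QK ∧ ∃ b : ℕ, Odd b ∧ (b : ℤ) • t = 0}
      zero_mem' := ⟨QK.zero_mem, 1, odd_one, by simp⟩
      add_mem' := by
        rintro t₁ t₂ ⟨ht₁, b₁, hb₁, hbt₁⟩ ⟨ht₂, b₂, hb₂, hbt₂⟩
        refine ⟨QK.add_mem ht₁ ht₂, b₁ * b₂, hb₁.mul hb₂, ?_⟩
        have hc : ((b₁ * b₂ : ℕ) : ℤ) = (b₁ : ℤ) * (b₂ : ℤ) := by push_cast; ring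
        rw [hc]
        exact hkill _ _ _ _ hbt₁ hbt₂
      smul_mem' := by
        rintro c t ⟨ht, b, hb, hbt⟩
        exact ⟨QK.smul_mem c ht, b, hb, by rw [smul_comm, hbt, smul_zero]⟩ }
  have hAQK : A ≤ QK := fun t ht => ht.1
  have hBQK : B ≤ QK := fun t ht => ht.1
  -- the induced projection on the quotient
  have hle : K ≤ Submodule.comap e K := by
    rw [hKdef, span_le, Set.singleton_subset_iff]
    exact Submodule.mem_comap.mpr (by rw [heid d₀ hd₀Q]; exact mem_span_singleton_self d₀)
  let ebar : (G ⧸ K) →ₗ[ℤ] (G ⧸ K) := Submodule.mapQ K K e hle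
  have hebar : ∀ g : G, ebar (K.mkQ g) = K.mkQ (e g) := by
    intro g
    show (Submodule.mapQ K K e hle) (Submodule.Quotient.mk g) = Submodule.Quotient.mk (e g)
    rw [Submodule.mapQ_apply]
  have hebarQK : ∀ t ∈ QK, ebar t = t := by
    rintro t ⟨q, hq, rfl⟩
    rw [hebar, heid q hq]
  have hebarmem : ∀ t : G ⧸ K, ebar t ∈ QK := by
    intro t
    obtain ⟨g, rfl⟩ := K.mkQ_surjective t
    rw [hebar]
    exact Submodule.mem_map_of_mem (heQ g)
  -- QK ≤ A ⊔ B
  have hQKAB : QK ≤ A ⊔ B := by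
    rintro t ⟨q, hq, rfl⟩
    obtain ⟨hqD, n, hn, m, hm⟩ := hq
    have htkill : (n : ℤ) • (K.mkQ q) = 0 := by
      rw [← map_smul, hm, map_smul, hmk0, smul_zero]
    have htQK : K.mkQ q ∈ QK := Submodule.mem_map_of_mem ⟨hqD, n, hn, m, hm⟩
    obtain ⟨a, b, hb, hn'⟩ := Nat.exists_eq_pow_mul_and_not_dvd hn.ne' 2 (by norm_num)
    have hbodd : Odd b := by
      rcases Nat.even_or_odd b with he | ho
      · exact absurd he.two_dvd hb
      · exact ho
    have hnd : ¬ 2 ∣ b := by have := Nat.odd_iff.mp hbodd; omega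
    have hcop : IsCoprime ((2 : ℤ) ^ a) (b : ℤ) := by
      have h1 : Nat.Coprime (2 ^ a) b :=
        Nat.Coprime.pow_left _ ((Nat.prime_two.coprime_iff_not_dvd).mpr hnd)
      have := Nat.Coprime.isCoprime h1
      simpa using this
    obtain ⟨u, v, huv⟩ := hcop
    have hnt : ((2:ℤ)^a * (b:ℤ)) • (K.mkQ q) = 0 := by
      have hcast : ((n : ℕ) : ℤ) = (2:ℤ)^a * (b:ℤ) := by rw [hn']; push_cast; ring
      rw [← hcast]; exact htkill
    have hsplit : K.mkQ q = (v * (b:ℤ)) • (K.mkQ q) + (u * (2:ℤ)^a) • (K.mkQ q) := by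
      rw [← add_smul, show v * (b:ℤ) + u * (2:ℤ)^a = u * (2:ℤ)^a + v * (b:ℤ) by ring,
        huv, one_smul]
    rw [hsplit]
    refine Submodule.add_mem_sup ?_ ?_
    · -- killed by 2^a: in A
      refine ⟨QK.smul_mem _ htQK, a, ?_⟩
      rw [smul_smul, show (2:ℤ)^a * (v * (b:ℤ)) = v * ((2:ℤ)^a * (b:ℤ)) by ring,
        mul_smul, hnt, smul_zero]
    · -- killed by b, odd: in B
      refine ⟨QK.smul_mem _ htQK, b, hbodd, ?_⟩
      rw [smul_smul, show (b:ℤ) * (u * (2:ℤ)^a) = u * ((2:ℤ)^a * (b:ℤ)) by ring,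
        mul_smul, hnt, smul_zero]
  -- A and B ⊔ ker ebar are complementary
  set C : Submodule ℤ (G ⧸ K) := B ⊔ LinearMap.ker ebar with hCdef
  have hdisj : Disjoint A C := by
    rw [disjoint_iff, eq_bot_iff]
    rintro t ⟨htA, htC⟩
    obtain ⟨tb, htb, tn, htn, rfl⟩ := Submodule.mem_sup.mp htC
    have h1 : ebar (tb + tn) = tb + tn := hebarQK _ (hAQK htA)
    have h2 : ebar (tb + tn) = tb := by
      rw [map_add, hebarQK tb (hBQK htb), (LinearMap.mem_ker).mp htn, add_zero]
    have htn0 : tn = 0 := by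
      have h3 : tb + tn = tb := h1.symm.trans h2
      simpa using h3
    subst htn0
    rw [add_zero] at htA ⊢
    -- tb ∈ A ⊓ B hence tb = 0
    obtain ⟨-, a, ha⟩ := htA
    obtain ⟨-, b, hbodd, hbt⟩ := htb
    have hnd : ¬ 2 ∣ b := by have := Nat.odd_iff.mp hbodd; omega
    have hcop : IsCoprime ((2 : ℤ) ^ a) (b : ℤ) := by
      have h1 : Nat.Coprime (2 ^ a) b :=
        Nat.Coprime.pow_left _ ((Nat.prime_two.coprime_iff_not_dvd).mpr hnd)
      have := Nat.Coprime.isCoprime h1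
      simpa using this
    rw [Submodule.mem_bot]
    exact smul_coprime_zero hcop ha hbt
  have hcodisj : Codisjoint A C := by
    rw [codisjoint_iff, eq_top_iff]
    rintro t -
    have hdecomp : t = ebar t + (t - ebar t) := by abel
    have h1 : ebar t ∈ A ⊔ B := hQKAB (hebarmem t)
    have h2 : t - ebar t ∈ LinearMap.ker ebar := by
      rw [LinearMap.mem_ker, map_sub, hebarQK _ (hebarmem t), sub_self]
    have h3 : ebar t ∈ A ⊔ C := sup_le_sup_left le_sup_left A h1
    rw [hdecomp]
    exact Submodule.add_mem _ h3 (Submodule.mem_sup_right (Submodule.mem_sup_right h2))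
  have hcompl : IsCompl A C := ⟨hdisj, hcodisj⟩
  -- the projection and the map η
  let pr := Submodule.linearProjOfIsCompl A C hcompl
  let ε : (G ⧸ K) →ₗ[ℤ] (G ⧸ K) := A.subtype ∘ₗ pr
  have hεA : ∀ t ∈ A, ε t = t := by
    intro t ht
    show (A.subtype) (pr t) = t
    rw [show pr t = Submodule.projectionOnto A C hcompl (⟨t, ht⟩ : A) from rfl,
      Submodule.projectionOnto_apply_left hcompl (⟨t, ht⟩ : A)]
    rfl
  have hεC : ∀ t ∈ C, ε t = 0 := by
    intro t ht
    show (A.subtype) (pr t) = 0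
    rw [show pr t = 0 from Submodule.projectionOnto_apply_of_mem_right hcompl ht]
    rfl
  have hεmem : ∀ t, ε t ∈ A := fun t => (pr t).2
  let η : (G ⧸ K) →ₗ[ℤ] (G ⧸ K) := LinearMap.id - (2 : ℤ) • ε
  have hηapply : ∀ t, η t = t - (2 : ℤ) • ε t := fun t => rfl
  have hinv : ∀ t, η (η t) = t := by
    intro t
    rw [hηapply, hηapply, map_sub, map_smul, hεA _ (hεmem t), smul_sub]
    abel
  have hηsurj : Function.Surjective η := fun t => ⟨η t, hinv t⟩
  have hηker : LinearMap.ker η = ⊥ :=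
    LinearMap.ker_eq_bot.mpr (Function.LeftInverse.injective hinv)
  obtain ⟨φ, hφ⟩ := h K K hKsmall hKsmall η hηsurj (by rw [hηker]; exact isSmall_bot)
  have hφ' : ∀ g : G, K.mkQ (φ g) = η (K.mkQ g) := fun g => LinearMap.congr_fun hφ g
  -- elements y k with 2^k • y k = d₀, and z with 3 • z = d₀
  have hyex : ∀ k : ℕ, ∃ w, w ∈ Q ∧ ((2 ^ k : ℕ) : ℤ) • w = d₀ := by
    intro k
    obtain ⟨w, hw, hww⟩ := hQdiv (2 ^ k) (by positivity) d₀ hd₀Q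
    exact ⟨w, hw, hww⟩
  choose y hyQ hy2 using hyex
  obtain ⟨z, hzQ, h3z⟩ := hQdiv 3 (by norm_num) d₀ hd₀Q
  have hy2' : ∀ k, ((2:ℤ) ^ k) • y k = d₀ := by
    intro k
    have := hy2 k
    rwa [show (((2:ℕ) ^ k : ℕ) : ℤ) = (2:ℤ)^k by push_cast; ring] at this
  have h3z' : ((3:ℕ) : ℤ) • z = d₀ := h3z
  have h3z'' : (3:ℤ) • z = d₀ := by exact_mod_cast h3z
  -- mk (y k) lies in A
  have hmyA : ∀ k, K.mkQ (y k) ∈ A := by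
    intro k
    refine ⟨Submodule.mem_map_of_mem (hyQ k), k, ?_⟩
    rw [← map_smul, hy2' k, hmk0]
  have hmzB : K.mkQ z ∈ B := by
    refine ⟨Submodule.mem_map_of_mem hzQ, 3, ⟨1, by norm_num⟩, ?_⟩
    rw [← map_smul, h3z', hmk0]
  -- consequences of the lifting
  have hyk : ∀ k : ℕ, ∃ m : ℤ, φ (y k) + y k = m • d₀ := by
    intro k
    have h1 : η (K.mkQ (y k)) = - K.mkQ (y k) := by
      rw [hηapply, hεA _ (hmyA k), two_smul]
      abel
    have h2 : K.mkQ (φ (y k) + y k) = 0 := by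
      rw [map_add, hφ', h1]
      abel
    have := (Submodule.Quotient.mk_eq_zero K).mp h2
    rw [hKdef] at this
    obtain ⟨m, hm⟩ := mem_span_singleton.mp this
    exact ⟨m, hm.symm⟩
  have hzk : ∃ m : ℤ, φ z - z = m • d₀ := by
    have h1 : η (K.mkQ z) = K.mkQ z := by
      rw [hηapply, hεC _ (Submodule.mem_sup_left hmzB), smul_zero, sub_zero]
    have h2 : K.mkQ (φ z - z) = 0 := by
      rw [map_sub, hφ', h1]
      abel
    have := (Submodule.Quotient.mk_eq_zero K).mp h2
    rw [hKdef] at this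
    obtain ⟨m, hm⟩ := mem_span_singleton.mp this
    exact ⟨m, hm.symm⟩
  obtain ⟨m', hm'⟩ := hzk
  -- φ d₀ computed two ways
  have hφd₀3 : φ d₀ = d₀ + (3 * m') • d₀ := by
    have : φ d₀ = (3:ℤ) • φ z := by rw [← map_smul, h3z'']
    rw [this, show φ z = z + m' • d₀ by rw [← hm']; abel, smul_add, h3z'', smul_smul]
  have hφd₀2 : ∀ k : ℕ, ∃ mk : ℤ, φ d₀ = ((2:ℤ)^k * mk) • d₀ - d₀ := by
    intro k
    obtain ⟨mk, hmk⟩ := hyk k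
    refine ⟨mk, ?_⟩
    have : φ d₀ = ((2:ℤ)^k) • φ (y k) := by rw [← map_smul, hy2' k]
    rw [this, show φ (y k) = mk • d₀ - y k by rw [← hmk]; abel, smul_sub, hy2' k, smul_smul]
  -- derive that 2 + 3m' is divisible by every power of 2
  have hdvd : ∀ k : ℕ, ∃ mk : ℤ, (2:ℤ)^k * mk = 2 + 3 * m' := by
    intro k
    obtain ⟨mk, hmk⟩ := hφd₀2 k
    refine ⟨mk, ?_⟩
    have hcomb : ((2:ℤ)^k * mk - (2 + 3 * m')) • d₀ = 0 := by
      have h1 : ((2:ℤ)^k * mk) • d₀ - d₀ = d₀ + (3 * m') • d₀ := by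
        rw [← hmk, hφd₀3]
      have h2 : ((2:ℤ)^k * mk - (2 + 3 * m')) • d₀ =
          (((2:ℤ)^k * mk) • d₀ - d₀) - (d₀ + (3 * m') • d₀) := by
        rw [sub_smul, add_smul, mul_smul]
        rw [show ((2:ℤ) : ℤ) • d₀ = d₀ + d₀ by rw [two_smul]]
        rw [mul_smul]
        abel
      rw [h2, h1, sub_self]
    rcases hfree _ _ hd₀D hcomb with hc | hc
    · linarith [hc]
    · exact absurd hc hd₀
  -- contradiction
  have hc0 : 2 + 3 * m' = 0 := by
    by_contra hc
    set c : ℤ := 2 + 3 * m' with hcdef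
    obtain ⟨mk, hmk⟩ := hdvd (c.natAbs)
    have hdv : (2:ℤ)^(c.natAbs) ∣ c := ⟨mk, hmk.symm⟩
    have hle : (2:ℤ)^(c.natAbs) ≤ |c| := Int.le_of_dvd (abs_pos.mpr hc) ((dvd_abs _ _).mpr hdv)
    have hlt : |c| < (2:ℤ)^(c.natAbs) := by
      rw [Int.abs_eq_natAbs]
      exact_mod_cast Nat.lt_two_pow_self (n := c.natAbs)
    exact absurd hle (not_le.mpr hlt)
  omega

end Aux

/-- Every dual automorphism-invariant abelian group is reduced: it has no nonzero
divisible subgroup. -/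
theorem dualAutoInv_abelian_reduced
    (G : Type*) [AddCommGroup G] (h : IsDualAutoInv ℤ G) :
    ∀ D : Submodule ℤ G,
      (∀ n : ℕ, 0 < n → ∀ d ∈ D, ∃ x ∈ D, (n : ℤ) • x = d) → D = ⊥ := by
  intro D hDdiv
  have hDdiv' : DivIn D := hDdiv
  rw [eq_bot_iff]
  intro d₀ hd₀D
  rw [Submodule.mem_bot]
  by_contra hd₀
  by_cases htor : ∃ t ∈ D, t ≠ 0 ∧ ∃ n : ℕ, 0 < n ∧ (n : ℤ) • t = 0
  · obtain ⟨t, htD, ht0, n, hn, hnt⟩ := htor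
    have hex : ∃ m : ℕ, 0 < m ∧ (m : ℤ) • t = 0 := ⟨n, hn, hnt⟩
    classical
    obtain ⟨n₀, hn₀pos, hn₀t, hn₀min⟩ :
        ∃ m : ℕ, 0 < m ∧ (m : ℤ) • t = 0 ∧ ∀ k < m, ¬(0 < k ∧ (k : ℤ) • t = 0) :=
      ⟨Nat.find hex, (Nat.find_spec hex).1, (Nat.find_spec hex).2,
        fun k hk => Nat.find_min hex hk⟩
    have hn₀1 : n₀ ≠ 1 := by
      intro h1
      rw [h1] at hn₀t
      simp at hn₀t
      exact ht0 hn₀t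
    have hp : (n₀.minFac).Prime := Nat.minFac_prime hn₀1
    have hpdvd : n₀.minFac ∣ n₀ := Nat.minFac_dvd n₀
    have hdD : ((n₀ / n₀.minFac : ℕ) : ℤ) • t ∈ D := D.smul_mem _ htD
    have hpd : ((n₀.minFac : ℕ) : ℤ) • (((n₀ / n₀.minFac : ℕ) : ℤ) • t) = 0 := by
      rw [smul_smul, show ((n₀.minFac : ℕ) : ℤ) * ((n₀ / n₀.minFac : ℕ) : ℤ)
          = ((n₀ : ℕ) : ℤ) by rw [← Nat.cast_mul, Nat.mul_div_cancel' hpdvd]]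
      exact hn₀t
    have hd0 : ((n₀ / n₀.minFac : ℕ) : ℤ) • t ≠ 0 := by
      intro h0
      have hq : 0 < n₀ / n₀.minFac := Nat.div_pos (Nat.minFac_le hn₀pos) hp.pos
      have hlt : n₀ / n₀.minFac < n₀ := Nat.div_lt_self hn₀pos hp.one_lt
      exact (hn₀min _ hlt) ⟨hq, h0⟩
    exact torsion_case h hDdiv' hp hdD hd0 hpd
  · push_neg at htor
    have hfree : ∀ (c : ℤ) (y : G), y ∈ D → c • y = 0 → c = 0 ∨ y = 0 := by
      intro c y hy hcy
      by_contra hcon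
      push_neg at hcon
      refine htor y hy hcon.2 c.natAbs (Int.natAbs_pos.mpr hcon.1) ?_
      rcases Int.natAbs_eq c with hh | hh
      · rw [← hh]
        exact hcy
      · rw [show ((c.natAbs : ℕ) : ℤ) = -c by omega, neg_smul, hcy, neg_zero]
    exact torsionfree_case h hDdiv' hfree hd₀D hd₀
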